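/- For x ∈ [0, 1/4], set q_x = (4/7)x and r_x = 1 − (8/7)√(x(x+2)), and define G_x^{−1}(z) = −(7/4)z + √(7z + (1−x)²) + x − 1 for z ∈ [0, q_x], G_x^{−1}(z) = −(7/4)z + 2√(7z + 9 + x(x+2)) − 6 for z ∈ (q_x, r_x], and G_x^{−1}(z) = (1/256)(15 + 8x − 7z)(1 + 8x + 7z) for z ∈ (r_x, 1]. Then for every z ∈ [0,1], G_x(G_x^{−1}(z)) = z, where G_x(y) = (8/7)·(F_x(y) − (1/2)·min(y, 1/4)). -/
import Mathlib


open MeasureTheory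

/-- The distribution function `F_x` of `U·x + U·(1−U)` for `U` uniform on `[0,1]`. -/
noncomputable def F (x y : ℝ) : ℝ :=
  if y < x then (1 + x - Real.sqrt ((1 + x) ^ 2 - 4 * y)) / 2
  else if y < ((1 + x) / 2) ^ 2 then 1 - Real.sqrt ((1 + x) ^ 2 - 4 * y)
  else 1

/-- `G_x(y) = (8/7)·(F_x(y) − (1/2)·min(y, 1/4))`. -/
noncomputable def G (x y : ℝ) : ℝ := 8 / 7 * (F x y - (1 / 2) * min y (1 / 4))

/-- The explicit inverse of `G_x` for `x ∈ [0,1/4]`, given piecewise with breakpoints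
`q_x = (4/7)x` and `r_x = 1 − (8/7)√(x(x+2))`. -/
noncomputable def Ginv (x z : ℝ) : ℝ :=
  if z ≤ 4 / 7 * x then
    -(7 / 4) * z + Real.sqrt (7 * z + (1 - x) ^ 2) + x - 1
  else if z ≤ 1 - 8 / 7 * Real.sqrt (x * (x + 2)) then
    -(7 / 4) * z + 2 * Real.sqrt (7 * z + 9 + x * (x + 2)) - 6
  else
    (1 / 256) * (15 + 8 * x - 7 * z) * (1 + 8 * x + 7 * z)

lemma F_low (x y : ℝ) (hx0 : 0 ≤ x) (hx1 : x ≤ 1 / 4) (hy : y ≤ x) :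
    F x y = (1 + x - Real.sqrt ((1 + x) ^ 2 - 4 * y)) / 2 := by
  unfold F
  split_ifs with h h'
  · rfl
  · have hyx : y = x := le_antisymm hy (not_lt.mp h)
    subst hyx
    rw [show (1 + y) ^ 2 - 4 * y = (1 - y) ^ 2 by ring, Real.sqrt_sq (by linarith)]
    ring
  · exfalso
    have hyx : y = x := le_antisymm hy (not_lt.mp h)
    subst hyx
    push_neg at h'
    nlinarith
lemma le_of_sq_le' {a b : ℝ} (ha : 0 ≤ a) (hb : 0 ≤ b) (h : a ^ 2 ≤ b ^ 2) :
    a ≤ b := by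
  have := Real.sqrt_le_sqrt h
  rwa [Real.sqrt_sq ha, Real.sqrt_sq hb] at this

lemma F_mid (x y : ℝ) (hx0 : 0 ≤ x) (hxy : x ≤ y) (h4 : 4 * y ≤ (1 + x) ^ 2) :
    F x y = 1 - Real.sqrt ((1 + x) ^ 2 - 4 * y) := by
  unfold F
  split_ifs with h h'
  · linarith
  · rfl
  · push_neg at h'
    have : (1 + x) ^ 2 - 4 * y = 0 := by nlinarith
    rw [this, Real.sqrt_zero]
    ring

set_option maxHeartbeats 1000000 in
/-- For `x ∈ [0,1/4]`, the piecewise formula `Ginv x` is a right inverse of `G_x` on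
`[0,1]`: `G_x(G_x^{−1}(z)) = z` for every `z ∈ [0,1]`. -/
theorem G_inverse_small_x (x : ℝ) (hx : x ∈ Set.Icc (0:ℝ) (1 / 4))
    (z : ℝ) (hz : z ∈ Set.Icc (0:ℝ) 1) :
    G x (Ginv x z) = z := by
  obtain ⟨hx0, hx1⟩ := hx
  obtain ⟨hz0, hz1⟩ := hz
  unfold Ginv
  split_ifs with h1 h2
  · -- Case 1 : z ≤ 4x/7
    set s := Real.sqrt (7 * z + (1 - x) ^ 2) with hs_def
    have harg : (0:ℝ) ≤ 7 * z + (1 - x) ^ 2 := by positivity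
    have hs0 : 0 ≤ s := Real.sqrt_nonneg _
    have hs2 : s ^ 2 = 7 * z + (1 - x) ^ 2 := Real.sq_sqrt harg
    clear_value s
    set y : ℝ := -(7 / 4) * z + s + x - 1 with hy_def
    clear_value y
    have hyx : y ≤ x := by
      -- s ≤ 1 + 7z/4, since (1+7z/4)^2 - s^2 = (x - 7z/4)(2 - x - 7z/4) ≥ 0
      have key : s ≤ 1 + 7 / 4 * z := by
        refine le_of_sq_le' hs0 (by linarith) ?_
        nlinarith [mul_nonneg (by linarith : (0:ℝ) ≤ x - 7 / 4 * z)
          (by linarith : (0:ℝ) ≤ 2 - x - 7 / 4 * z)]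
      simp only [hy_def]; linarith
    have hsq : (1 + x) ^ 2 - 4 * y = (2 - s) ^ 2 := by
      simp only [hy_def]; linear_combination -hs2
    have hs2le : s ≤ 2 := le_of_sq_le' hs0 (by norm_num) (by nlinarith)
    have hmin : min y (1 / 4) = y := min_eq_left (by linarith)
    rw [G, F_low x y hx0 hx1 hyx, hmin, hsq, Real.sqrt_sq (by linarith)]
    simp only [hy_def]; ring
  · -- Case 2 : 4x/7 < z ≤ 1 - (8/7)√(x(x+2))
    push_neg at h1
    set t := Real.sqrt (x * (x + 2)) with ht_def
    have ht0 : 0 ≤ t := Real.sqrt_nonneg _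
    have ht2 : t ^ 2 = x * (x + 2) := Real.sq_sqrt (by positivity)
    clear_value t
    have htle : t ≤ 3 / 4 := le_of_sq_le' ht0 (by norm_num) (by nlinarith)
    set s := Real.sqrt (7 * z + 9 + x * (x + 2)) with hs_def
    have hs0 : 0 ≤ s := Real.sqrt_nonneg _
    have hs2 : s ^ 2 = 7 * z + 9 + x * (x + 2) := Real.sq_sqrt (by positivity)
    clear_value s
    set y : ℝ := -(7 / 4) * z + 2 * s - 6 with hy_def
    clear_value y
    have hs4 : s ≤ 4 - t := by
      refine le_of_sq_le' hs0 (by linarith) ?_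
      nlinarith []
    have hxy : x ≤ y := by
      -- 2s ≥ 7z/4 + 6 + x
      have key : 7 / 4 * z + 6 + x ≤ 2 * s := by
        refine le_of_sq_le' (by linarith) (by linarith) ?_
        nlinarith [mul_nonneg (by linarith : (0:ℝ) ≤ 7 / 4 * z - x)
          (by linarith : (0:ℝ) ≤ 4 - 3 * x - 7 / 4 * z)]
      simp only [hy_def]; linarith
    have hy14 : y ≤ 1 / 4 := by
      have key : 2 * s ≤ 25 / 4 + 7 / 4 * z := by
        refine le_of_sq_le' (by linarith) (by linarith) ?_
        nlinarith [mul_self_le_mul_self (by linarith : (0:ℝ) ≤ 8 * t)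
          (by linarith : 8 * t ≤ 7 * (1 - z))]
      simp only [hy_def]; linarith
    have hsq : (1 + x) ^ 2 - 4 * y = (4 - s) ^ 2 := by
      simp only [hy_def]; linear_combination -hs2
    have h4y : 4 * y ≤ (1 + x) ^ 2 := by linarith [sq_nonneg (4 - s), hsq]
    have hmin : min y (1 / 4) = y := min_eq_left hy14
    rw [G, F_mid x y hx0 hxy h4y, hmin, hsq, Real.sqrt_sq (by linarith)]
    simp only [hy_def]; ring
  · -- Case 3 : z > 1 - (8/7)√(x(x+2))
    push_neg at h1 h2
    set t := Real.sqrt (x * (x + 2)) with ht_def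
    have ht0 : 0 ≤ t := Real.sqrt_nonneg _
    have ht2 : t ^ 2 = x * (x + 2) := Real.sq_sqrt (by positivity)
    clear_value t
    set y : ℝ := 1 / 256 * (15 + 8 * x - 7 * z) * (1 + 8 * x + 7 * z) with hy_def
    clear_value y
    have hfac : 0 ≤ (8 / 7 * t - (1 - z)) * (8 / 7 * t + (1 - z)) :=
      mul_nonneg (by linarith) (by linarith)
    have hz2 : (1 - z) ^ 2 ≤ 64 / 49 * t ^ 2 := by nlinarith [hfac]
    have hy14 : 1 / 4 ≤ y := by rw [hy_def]; nlinarith [hz2, ht2, sq_nonneg x]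
    have hxy : x ≤ y := by linarith
    have hsq : (1 + x) ^ 2 - 4 * y = (7 / 8 * (1 - z)) ^ 2 := by
      rw [hy_def]; ring
    have h4y : 4 * y ≤ (1 + x) ^ 2 := by nlinarith [sq_nonneg (7 / 8 * (1 - z))]
    have hmin : min y (1 / 4) = (1 / 4 : ℝ) := min_eq_right hy14
    rw [G, F_mid x y hx0 hxy h4y, hmin, hsq, Real.sqrt_sq (by linarith)]
    ring
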